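/- Let (L,A) be a Lie pair with splitting L ≅ A⊕B, and let κ: Der(L) → Ω^1_A(B) be defined by κ(δ)(a) := −pr_B δ(a). Then d^Bott_A(κ(δ)) = 0 for every δ ∈ Der(L); that is, for all a_1,a_2 ∈ Γ(A): ∇_{a_1}(κ(δ)(a_2)) − ∇_{a_2}(κ(δ)(a_1)) − κ(δ)([a_1,a_2]_A) = 0. -/

import Mathlib

/-- `δ` is a derivation of the Lie algebroid `L` with symbol `s`. -/
def IsLieAlgebroidDerivation
    (K R L : Type) [CommRing K] [CommRing R] [Algebra K R]
    [LieRing L] [LieAlgebra K L] [Module R L]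
    (ρ : L →ₗ[R] Derivation K R R)
    (s : Derivation K R R) (δ : L →ₗ[K] L) : Prop :=
  (∀ (f : R) (u : L), δ (f • u) = s f • u + f • δ u) ∧
  (∀ u : L, ρ (δ u) = ⁅s, ρ u⁆) ∧
  (∀ u v : L, δ ⁅u, v⁆ = ⁅δ u, v⁆ + ⁅u, δ v⁆)

variable (K R L : Type) [CommRing K] [CommRing R] [Algebra K R]
variable [LieRing L] [LieAlgebra K L] [Module R L]
variable (ρ : L →ₗ[R] Derivation K R R)
variable (A B : Submodule R L) (hAB : IsCompl A B)

/-- The projection pr_A : L → A ⊆ L associated to the splitting L = A ⊕ B. -/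
noncomputable def prA : L →ₗ[R] L :=
  A.subtype ∘ₗ Submodule.linearProjOfIsCompl A B hAB

/-- The projection pr_B : L → B ⊆ L associated to the splitting L = A ⊕ B. -/
noncomputable def prB : L →ₗ[R] L :=
  B.subtype ∘ₗ Submodule.linearProjOfIsCompl B A hAB.symm


/-!
STATEMENT 15: Let (L,A) be a Lie pair with splitting L ≅ A⊕B, and let
κ : Der(L) → Ω¹_A(B) be defined by κ(δ)(a) := −pr_B(δ(a)).  Then d^Bott_A(κ(δ)) = 0 for every
δ ∈ Der(L); that is, for all a₁, a₂ ∈ Γ(A):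

  ∇_{a₁}(κ(δ)(a₂)) − ∇_{a₂}(κ(δ)(a₁)) − κ(δ)([a₁,a₂]_A) = 0 ,

where ∇_a b = pr_B[a,b]_L is the Bott connection.  Lie algebroids are formalised
algebraically: Γ(L) is a Lie K-algebra, an R-module (R = C^∞(M,K)) with an R-linear anchor
ρ : L → Der_K(R) that is a morphism of Lie algebras satisfying the Leibniz rule;
A and B are complementary R-submodules of L with A closed under the bracket.
-/

theorem bott_differential_of_kappa_vanishes
    (hanchor : ∀ u v : L, ρ ⁅u, v⁆ = ⁅ρ u, ρ v⁆)
    (hleibniz : ∀ (u v : L) (f : R), ⁅u, f • v⁆ = ρ u f • v + f • ⁅u, v⁆)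
    (hA : ∀ x ∈ A, ∀ y ∈ A, ⁅x, y⁆ ∈ A)
    (s : Derivation K R R) (δ : L →ₗ[K] L)
    (hδ : IsLieAlgebroidDerivation K R L ρ s δ) :
    ∀ a₁ ∈ A, ∀ a₂ ∈ A,
      prB R L A B hAB ⁅a₁, -(prB R L A B hAB (δ a₂))⁆
        - prB R L A B hAB ⁅a₂, -(prB R L A B hAB (δ a₁))⁆
        - (-(prB R L A B hAB (δ ⁅a₁, a₂⁆))) = 0 := by
  intro a₁ ha₁ a₂ ha₂
  set P := prB R L A B hAB with hP
  have hP0 : ∀ x ∈ A, P x = 0 := by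
    intro x hx
    simp [hP, prB, Submodule.projectionOnto_apply_of_mem_right hAB.symm hx]
    exact Submodule.projectionOnto_apply_of_mem_right hAB.symm hx
  have hdec : ∀ x : L, x = (A.linearProjOfIsCompl B hAB x : L) + P x := by
    intro x
    simp [hP, prB]
    exact (Submodule.projection_add_projection_eq_self hAB x).symm
  have key : ∀ b ∈ A, ∀ x : L, P ⁅b, x⁆ = P ⁅b, P x⁆ := by
    intro b hb x
    conv_lhs => rw [hdec x]
    rw [lie_add, map_add, hP0 _ (hA b hb _ (A.linearProjOfIsCompl B hAB x).2)]
    abel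
  have h3 := hδ.2.2 a₁ a₂
  have : P (δ ⁅a₁, a₂⁆) = P ⁅a₁, P (δ a₂)⁆ - P ⁅a₂, P (δ a₁)⁆ := by
    rw [h3, map_add, key a₁ ha₁, ← key a₂ ha₂]
    rw [← lie_skew a₂ (δ a₁), map_neg]
    abel
  rw [lie_neg, lie_neg, map_neg, map_neg, this]
  abel
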